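/- Let N ≥ 1, κ ≥ 0, let a be a bilinear form on ℝ^N satisfying a(v,v) ≥ c₀‖v‖² for all v, with c₀ > 0 and ‖·‖ the Euclidean norm, let d ∈ ℝ^N have strictly positive entries defining s(v,w) = Σᵢ dᵢ vᵢ wᵢ, and let f : ℝ^N → ℝ be linear. If u₁, u₂ ∈ ℝ^N both satisfy a(uⱼ⁺, v) + s(uⱼ⁻, v) = f(v) for all v ∈ ℝ^N (j = 1, 2), then u₁ = u₂. -/

import Mathlib

open scoped BigOperators

/-- Componentwise clipping to `[0, κ]` on Euclidean space. -/
noncomputable def clipE {N : ℕ} (κ : ℝ) (v : EuclideanSpace ℝ (Fin N)) :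
    EuclideanSpace ℝ (Fin N) :=
  WithLp.toLp 2 (fun i => max 0 (min (v i) κ))

lemma clip_mono' (κ : ℝ) {x y : ℝ} (h : x ≤ y) :
    max 0 (min x κ) ≤ max 0 (min y κ) :=
  max_le_max le_rfl (min_le_min h le_rfl)

lemma resid_mono' (κ : ℝ) {x y : ℝ} (h : x ≤ y) :
    x - max 0 (min x κ) ≤ y - max 0 (min y κ) := by
  have e : ∀ t : ℝ, t - max 0 (min t κ) = min t (max 0 (t - κ)) := by
    intro t
    rcases le_total t κ with h1 | h1 <;> rcases le_total t 0 with h2 | h2 <;>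
      rcases le_total κ 0 with h3 | h3 <;>
      simp [min_eq_left, min_eq_right, max_eq_left, max_eq_right, h1, h2, h3, sub_nonpos.mpr,
        sub_nonneg.mpr]
  rw [e x, e y]
  exact min_le_min h (max_le_max le_rfl (by linarith))

lemma key_clip (κ x y : ℝ) :
    0 ≤ ((x - max 0 (min x κ)) - (y - max 0 (min y κ))) * (max 0 (min x κ) - max 0 (min y κ)) := by
  rcases le_total x y with h | h
  · nlinarith [resid_mono' κ h, clip_mono' κ h]
  · nlinarith [resid_mono' κ h, clip_mono' κ h]

/-- uniqueness for the bound-preserving method: if `a` is coercive and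
the diagonal weights of `s` are strictly positive, then two solutions of
`a(u⁺, v) + s(u⁻, v) = f(v)` coincide. -/
theorem bpm_uniqueness (N : ℕ) (hN : 1 ≤ N) (κ : ℝ) (hκ : 0 ≤ κ)
    (a : EuclideanSpace ℝ (Fin N) →ₗ[ℝ] EuclideanSpace ℝ (Fin N) →ₗ[ℝ] ℝ)
    (c₀ : ℝ) (hc₀ : 0 < c₀)
    (hcoer : ∀ v : EuclideanSpace ℝ (Fin N), c₀ * ‖v‖ ^ 2 ≤ a v v)
    (d : Fin N → ℝ) (hd : ∀ i, 0 < d i)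
    (s : EuclideanSpace ℝ (Fin N) → EuclideanSpace ℝ (Fin N) → ℝ)
    (hs : ∀ v w : EuclideanSpace ℝ (Fin N), s v w = ∑ i, d i * v i * w i)
    (f : EuclideanSpace ℝ (Fin N) →ₗ[ℝ] ℝ)
    (u₁ u₂ : EuclideanSpace ℝ (Fin N))
    (hu₁ : ∀ v : EuclideanSpace ℝ (Fin N),
      a (clipE κ u₁) v + s (u₁ - clipE κ u₁) v = f v)
    (hu₂ : ∀ v : EuclideanSpace ℝ (Fin N),
      a (clipE κ u₂) v + s (u₂ - clipE κ u₂) v = f v) :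
    u₁ = u₂ := by
  set p : EuclideanSpace ℝ (Fin N) := clipE κ u₁ - clipE κ u₂ with hp
  have hdiff : ∀ v : EuclideanSpace ℝ (Fin N),
      a p v = - ∑ i, d i * ((u₁ i - clipE κ u₁ i) - (u₂ i - clipE κ u₂ i)) * v i := by
    intro v
    have h1 := hu₁ v
    have h2 := hu₂ v
    have hap : a p v = a (clipE κ u₁) v - a (clipE κ u₂) v := by
      rw [hp, map_sub]; simp
    rw [hs] at h1 h2
    have hsum : (∑ i, d i * ((u₁ - clipE κ u₁) i) * v i)
        - (∑ i, d i * ((u₂ - clipE κ u₂) i) * v i)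
        = ∑ i, d i * ((u₁ i - clipE κ u₁ i) - (u₂ i - clipE κ u₂ i)) * v i := by
      rw [← Finset.sum_sub_distrib]
      apply Finset.sum_congr rfl
      intro i _
      simp only [PiLp.sub_apply]
      ring
    rw [hap]
    linarith [h1, h2, hsum]
  have happ : a p p ≤ 0 := by
    rw [hdiff p]
    have : 0 ≤ ∑ i, d i * ((u₁ i - clipE κ u₁ i) - (u₂ i - clipE κ u₂ i)) * p i := by
      apply Finset.sum_nonneg
      intro i _
      have hpi : p i = clipE κ u₁ i - clipE κ u₂ i := by simp [hp, PiLp.sub_apply]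
      have hdi := (hd i).le
      rw [hpi]
      simp only [clipE]
      nlinarith [key_clip κ (u₁ i) (u₂ i)]
    linarith
  have hp0 : p = 0 := by
    have h := hcoer p
    have : c₀ * ‖p‖ ^ 2 ≤ 0 := le_trans h happ
    have hsq : ‖p‖ ^ 2 = 0 := by nlinarith [sq_nonneg ‖p‖]
    have hn : ‖p‖ = 0 := by
      have := pow_eq_zero_iff (n := 2) (by norm_num) |>.mp hsq
      exact this
    exact norm_eq_zero.mp hn
  have hclip : clipE κ u₁ = clipE κ u₂ := sub_eq_zero.mp hp0
  apply PiLp.ext; intro i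
  have hsv : ∀ v : EuclideanSpace ℝ (Fin N), ∑ j, d j * (u₁ j - u₂ j) * v j = 0 := by
    intro v
    have h1 := hu₁ v
    have h2 := hu₂ v
    rw [hclip] at h1
    have h3 : s (u₁ - clipE κ u₂) v = s (u₂ - clipE κ u₂) v := by linarith
    rw [hs, hs, ← sub_eq_zero, ← Finset.sum_sub_distrib] at h3
    rw [← h3]
    apply Finset.sum_congr rfl
    intro j _
    simp [PiLp.sub_apply]
    ring
  have hq := hsv (u₁ - u₂)
  have hzero : ∀ j : Fin N, d j * (u₁ j - u₂ j) * (u₁ - u₂) j = 0 := by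
    have hnn : ∀ j ∈ Finset.univ, (0:ℝ) ≤ d j * (u₁ j - u₂ j) * (u₁ - u₂) j := by
      intro j _
      have : (u₁ - u₂) j = u₁ j - u₂ j := by simp [PiLp.sub_apply]
      rw [this]
      nlinarith [(hd j).le, sq_nonneg (u₁ j - u₂ j)]
    intro j
    exact (Finset.sum_eq_zero_iff_of_nonneg hnn).mp hq j (Finset.mem_univ j)
  have hzi := hzero i
  have hui : (u₁ - u₂) i = u₁ i - u₂ i := by simp [PiLp.sub_apply]
  rw [hui] at hzi
  rcases mul_eq_zero.mp hzi with h | h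
  · rcases mul_eq_zero.mp h with h' | h'
    · exact absurd h' (ne_of_gt (hd i))
    · linarith
  · linarith
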